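/- arXiv:2501.00496 — 4 statements merged into one kernel-verified Lean document; each statement's English description precedes it below -/
import Mathlib

section
/- For any preordered ternary frame ⟨W, ≤, I, L⟩, the structural law α is valid (for all valuations v and formulae A,B,C, v((A⊗ᴸB)⊗ᴸC) ⊆ v(A⊗ᴸ(B⊗ᴸC))) if and only if L satisfies left skew associativity: for all a,b,c,d,x, Labx and Lxcd imply there exists y with Lbcy and Layd. -/
/-- Formulae of skew monoidal bi-closed logic:
atoms, unit I, left/right tensors and implications. -/
inductive Fma2 : Type
  | atom : ℕ → Fma2
  | I : Fma2
  | tL : Fma2 → Fma2 → Fma2   -- A ⊗ᴸ B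
  | lL : Fma2 → Fma2 → Fma2   -- A ⊸ᴸ B
  | tR : Fma2 → Fma2 → Fma2   -- A ⊗ᴿ B
  | lR : Fma2 → Fma2 → Fma2   -- A ⊸ᴿ B

section Frames

variable {W : Type}

/-- `IsTernaryFrame le I L` : ⟨W, ≤, I, L⟩ is a preordered ternary frame with a
downwards closed subset `I` and a ternary relation `L` upwards closed in its
first two arguments and downwards closed in the third. -/
structure IsTernaryFrame (le : W → W → Prop) (I : Set W)
    (L : W → W → W → Prop) : Prop where
  refl : ∀ a, le a a
  trans : ∀ {a b c}, le a b → le b c → le a c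
  I_down : ∀ {a b}, le a b → b ∈ I → a ∈ I
  L_up₁ : ∀ {a a' b c}, le a a' → L a b c → L a' b c
  L_up₂ : ∀ {a b b' c}, le b b' → L a b c → L a b' c
  L_down₃ : ∀ {a b c c'}, le c' c → L a b c → L a b c'

end Frames

/-- The law α is valid on a preordered ternary frame ⟨W, ≤, I, L⟩ iff `L`
satisfies left skew associativity. -/
theorem alpha_valid_iff_LSA (W : Type) (le : W → W → Prop) (I : Set W)
    (L : W → W → W → Prop) (hF : IsTernaryFrame le I L) :
    (∀ v : Fma2 → Set W,
        (∀ (A : Fma2) {a b}, le a b → b ∈ v A → a ∈ v A) →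
        (∀ A B, v (Fma2.tL A B) = {c | ∃ a ∈ v A, ∃ b ∈ v B, L a b c}) →
        ∀ A B C : Fma2,
          v (Fma2.tL (Fma2.tL A B) C) ⊆ v (Fma2.tL A (Fma2.tL B C))) ↔
    (∀ a b c d x, L a b x → L x c d → ∃ y, L b c y ∧ L a y d) := by

  constructor
  · intro hval a b c d x hab hxc
    -- canonical valuation with atoms 0,1,2 mapped to a↓, b↓, c↓
    let base : ℕ → Set W := fun n =>
      if n = 0 then {w | le w a} else if n = 1 then {w | le w b}
      else {w | le w c}
    let v : Fma2 → Set W := fun F =>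
      Fma2.rec (motive := fun _ => Set W)
        base ∅ (fun _ _ sA sB => {z | ∃ p ∈ sA, ∃ q ∈ sB, L p q z})
        (fun _ _ _ _ => ∅) (fun _ _ _ _ => ∅) (fun _ _ _ _ => ∅) F
    have hdown : ∀ (A : Fma2) {p q}, le p q → q ∈ v A → p ∈ v A := by
      intro A
      induction A with
      | atom n =>
        intro p q hpq hq
        simp only [v, base] at hq ⊢
        split_ifs at hq ⊢ <;> exact hF.trans hpq hq
      | I => intro p q _ hq; exact hq.elim
      | tL A B ihA ihB =>
        intro p q hpq hq
        obtain ⟨x', hx', y', hy', hL⟩ := hq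
        exact ⟨x', hx', y', hy', hF.L_down₃ hpq hL⟩
      | lL A B _ _ => intro p q _ hq; exact hq.elim
      | tR A B _ _ => intro p q _ hq; exact hq.elim
      | lR A B _ _ => intro p q _ hq; exact hq.elim
    have htl : ∀ A B, v (Fma2.tL A B) = {z | ∃ p ∈ v A, ∃ q ∈ v B, L p q z} :=
      fun A B => rfl
    have h := hval v hdown htl (Fma2.atom 0) (Fma2.atom 1) (Fma2.atom 2)
    have hd : d ∈ v (Fma2.tL (Fma2.tL (Fma2.atom 0) (Fma2.atom 1)) (Fma2.atom 2)) := by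
      refine ⟨x, ⟨a, ?_, b, ?_, hab⟩, c, ?_, hxc⟩ <;>
        simp [v, base, hF.refl]
    obtain ⟨a', ha', y, ⟨b', hb', c', hc', hbc⟩, hay⟩ := h hd
    simp only [v, base, Set.mem_setOf_eq, if_pos, if_neg] at ha' hb' hc'
    have ha' : le a' a := by simpa [v, base] using ha'
    have hb' : le b' b := by simpa [v, base] using hb'
    have hc' : le c' c := by simpa [v, base] using hc'
    exact ⟨y, hF.L_up₂ hc' (hF.L_up₁ hb' hbc), hF.L_up₁ ha' hay⟩
  · intro hLSA v _ htl A B C d hd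
    rw [htl] at hd
    obtain ⟨x, hx, c, hc, hxc⟩ := hd
    rw [htl] at hx
    obtain ⟨a, ha, b, hb, hab⟩ := hx
    obtain ⟨y, hbc, hay⟩ := hLSA a b c d x hab hxc
    rw [htl, htl]
    exact ⟨a, ha, y, ⟨b, hb, c, hc, hbc⟩, hay⟩
end

section
/- For any preordered ternary frame ⟨W, ≤, I, L⟩, the structural law λ is valid (for all v and A, v(I⊗ᴸA) ⊆ v(A)) if and only if L satisfies left skew left unitality: for all a,b ∈ W and e ∈ I, Leab implies b ≤ a. Similarly, ρ is valid (v(A) ⊆ v(A⊗ᴸI)) if and only if L satisfies left skew right unitality: for all a ∈ W there exists e ∈ I with Laea. -/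
/-- Canonical valuation used for the forward directions. -/
def myVal {W : Type} (I : Set W) (L : W → W → W → Prop) (f : ℕ → Set W) :
    Fma2 → Set W
  | Fma2.atom n => f n
  | Fma2.I => I
  | Fma2.tL A B => {c | ∃ a ∈ myVal I L f A, ∃ b ∈ myVal I L f B, L a b c}
  | Fma2.lL _ _ => ∅
  | Fma2.tR _ _ => ∅
  | Fma2.lR _ _ => ∅

theorem myVal_down {W : Type} {le : W → W → Prop} {I : Set W}
    {L : W → W → W → Prop} (hF : IsTernaryFrame le I L) (f : ℕ → Set W)
    (hf : ∀ n {a b}, le a b → b ∈ f n → a ∈ f n) :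
    ∀ (A : Fma2) {a b}, le a b → b ∈ myVal I L f A → a ∈ myVal I L f A := by
  intro A
  induction A with
  | atom n => intro a b h hb; exact hf n h hb
  | I => intro a b h hb; exact hF.I_down h hb
  | tL A B ihA ihB =>
      intro a b h hb
      obtain ⟨x, hx, y, hy, hL⟩ := hb
      exact ⟨x, hx, y, hy, hF.L_down₃ h hL⟩
  | lL A B _ _ => intro a b _ hb; exact hb.elim
  | tR A B _ _ => intro a b _ hb; exact hb.elim
  | lR A B _ _ => intro a b _ hb; exact hb.elim

/-- λ is valid iff L satisfies left skew left unitality, and ρ is valid iff L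
satisfies left skew right unitality. -/
theorem lam_rho_valid_iff_unitality (W : Type) (le : W → W → Prop) (I : Set W)
    (L : W → W → W → Prop) (hF : IsTernaryFrame le I L) :
    ((∀ v : Fma2 → Set W,
        (∀ (A : Fma2) {a b}, le a b → b ∈ v A → a ∈ v A) →
        v Fma2.I = I →
        (∀ A B, v (Fma2.tL A B) = {c | ∃ a ∈ v A, ∃ b ∈ v B, L a b c}) →
        ∀ A : Fma2, v (Fma2.tL Fma2.I A) ⊆ v A) ↔
      (∀ a b e, e ∈ I → L e a b → le b a)) ∧
    ((∀ v : Fma2 → Set W,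
        (∀ (A : Fma2) {a b}, le a b → b ∈ v A → a ∈ v A) →
        v Fma2.I = I →
        (∀ A B, v (Fma2.tL A B) = {c | ∃ a ∈ v A, ∃ b ∈ v B, L a b c}) →
        ∀ A : Fma2, v A ⊆ v (Fma2.tL A Fma2.I)) ↔
      (∀ a, ∃ e ∈ I, L a e a)) := by
  constructor
  · constructor
    · intro hval a b e he hL
      set f : ℕ → Set W := fun _ => {x | le x a} with hf
      have hdown : ∀ n {x y : W}, le x y → y ∈ f n → x ∈ f n :=
        by intro n x y hxy hy; exact hF.trans hxy hy
      have := hval (myVal I L f) (myVal_down hF f hdown) rfl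
        (fun A B => rfl) (Fma2.atom 0)
        (⟨e, he, a, hF.refl a, hL⟩ : b ∈ myVal I L f (Fma2.tL Fma2.I (Fma2.atom 0)))
      exact this
    · intro hU v hvdown hvI hvT A c hc
      rw [hvT] at hc
      obtain ⟨e, he, a, ha, hL⟩ := hc
      rw [hvI] at he
      exact hvdown A (hU a c e he hL) ha
  · constructor
    · intro hval a
      set f : ℕ → Set W := fun _ => {x | le x a} with hf
      have hdown : ∀ n {x y : W}, le x y → y ∈ f n → x ∈ f n :=
        by intro n x y hxy hy; exact hF.trans hxy hy
      have := hval (myVal I L f) (myVal_down hF f hdown) rfl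
        (fun A B => rfl) (Fma2.atom 0) (hF.refl a : a ∈ myVal I L f (Fma2.atom 0))
      obtain ⟨x, hx, e, he, hL⟩ := this
      exact ⟨e, he, hF.L_up₁ hx hL⟩
    · intro hU v hvdown hvI hvT A a ha
      obtain ⟨e, he, hL⟩ := hU a
      rw [hvT]
      exact ⟨a, ha, e, hvI ▸ he, hL⟩
end

section
/- For any preordered ternary frame ⟨W, ≤, I, L⟩, left skew associativity of L holds if and only if the law L (the internal composition law) is valid: for all valuations and formulae A,B,C, v(B⊸ᴸC) ⊆ v((A⊸ᴸB)⊸ᴸ(A⊸ᴸC)). -/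
/-- Canonical valuation extending an atom assignment. -/
def canonVal {W : Type} (I : Set W) (L : W → W → W → Prop)
    (va : ℕ → Set W) : Fma2 → Set W
  | Fma2.atom n => va n
  | Fma2.I => I
  | Fma2.tL A B => {c | ∃ a ∈ canonVal I L va A, ∃ b ∈ canonVal I L va B, L a b c}
  | Fma2.lL A B => {c | ∀ a ∈ canonVal I L va A, ∀ b, L c a b → b ∈ canonVal I L va B}
  | Fma2.tR _ _ => ∅
  | Fma2.lR _ _ => ∅

theorem canonVal_down {W : Type} {le : W → W → Prop} {I : Set W}
    {L : W → W → W → Prop} (hF : IsTernaryFrame le I L) (va : ℕ → Set W)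
    (hva : ∀ n {a b}, le a b → b ∈ va n → a ∈ va n) :
    ∀ (A : Fma2) {a b}, le a b → b ∈ canonVal I L va A → a ∈ canonVal I L va A := by
  intro A
  induction A with
  | atom n => exact fun h hb => hva n h hb
  | I => exact fun h hb => hF.I_down h hb
  | tL A B ihA ihB =>
      rintro a b h ⟨x, hx, y, hy, hL⟩
      exact ⟨x, hx, y, hy, hF.L_down₃ h hL⟩
  | lL A B ihA ihB =>
      intro a b h hb x hx y hy
      exact hb x hx y (hF.L_up₁ h hy)
  | tR A B _ _ => intro a b _ hb; exact hb.elim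
  | lR A B _ _ => intro a b _ hb; exact hb.elim

/-- Left skew associativity of `L` holds iff the internal composition law `L`
(`B⊸ᴸC ⊢ (A⊸ᴸB)⊸ᴸ(A⊸ᴸC)`) is valid. -/
theorem LSA_iff_L_law_valid (W : Type) (le : W → W → Prop) (I : Set W)
    (L : W → W → W → Prop) (hF : IsTernaryFrame le I L) :
    (∀ a b c d x, L a b x → L x c d → ∃ y, L b c y ∧ L a y d) ↔
    (∀ v : Fma2 → Set W,
        (∀ (A : Fma2) {a b}, le a b → b ∈ v A → a ∈ v A) →
        (∀ A B, v (Fma2.tL A B) = {c | ∃ a ∈ v A, ∃ b ∈ v B, L a b c}) →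
        (∀ A B, v (Fma2.lL A B) = {c | ∀ a ∈ v A, ∀ b, L c a b → b ∈ v B}) →
        ∀ A B C : Fma2,
          v (Fma2.lL B C) ⊆ v (Fma2.lL (Fma2.lL A B) (Fma2.lL A C))) := by
  constructor
  · -- LSA → validity
    intro lsa v _hdown _htL hlL A B C c0 hc0
    rw [hlL] at hc0 ⊢
    intro f hf e hLe
    rw [hlL] at hf ⊢
    intro a ha d hLd
    obtain ⟨y, hy1, hy2⟩ := lsa c0 f a d e hLe hLd
    exact hc0 y (hf a ha y hy1) d hy2
  · -- validity → LSA
    intro hval a b c d x hab hxc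
    -- atoms: 0 ↦ ↓c, 1 ↦ {w | ∃ c'≤c, L b c' w}, 2 ↦ image under L a of atom1
    set vB : Set W := {w | ∃ c', le c' c ∧ L b c' w} with hvB
    set vC : Set W := {w | ∃ y ∈ vB, L a y w} with hvC
    set va : ℕ → Set W := fun n =>
      match n with
      | 0 => {w | le w c}
      | 1 => vB
      | _ => vC with hva
    have hvadown : ∀ n {a' b'}, le a' b' → b' ∈ va n → a' ∈ va n := by
      intro n a' b' h hb'
      rcases n with _ | _ | n
      · exact hF.trans h hb'
      · obtain ⟨c', hc', hL⟩ := hb'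
        exact ⟨c', hc', hF.L_down₃ h hL⟩
      · obtain ⟨y, hy, hL⟩ := hb'
        exact ⟨y, hy, hF.L_down₃ h hL⟩
    set v := canonVal I L va with hv
    have hdown := canonVal_down hF va hvadown
    have key := hval v hdown (fun A B => rfl) (fun A B => rfl)
      (Fma2.atom 0) (Fma2.atom 1) (Fma2.atom 2)
    -- a ∈ v (B⊸C)
    have haBC : a ∈ v (Fma2.lL (Fma2.atom 1) (Fma2.atom 2)) := by
      intro y hy w hw
      exact ⟨y, hy, hw⟩
    have ha2 := key haBC
    -- b ∈ v (A⊸B)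
    have hbAB : b ∈ v (Fma2.lL (Fma2.atom 0) (Fma2.atom 1)) := by
      intro c' hc' w hw
      exact ⟨c', hc', hw⟩
    have hx2 : x ∈ v (Fma2.lL (Fma2.atom 0) (Fma2.atom 2)) := ha2 b hbAB x hab
    have hd : d ∈ v (Fma2.atom 2) := hx2 c (hF.refl c) d hxc
    obtain ⟨y, ⟨c', hc', hL⟩, hL2⟩ := hd
    exact ⟨y, hF.L_up₂ hc' hL, hL2⟩
end

section
/- For any preordered ternary frame ⟨W, ≤, I, R⟩, right skew left unitality of R (for all a ∈ W there exists e ∈ I with Reaa) holds if and only if the jᴿ law is valid: for all valuations v and formulae A,B, if I ⊆ v(A⊸ᴿB) then v(A) ⊆ v(B). -/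
/-- Right skew left unitality of `R` holds iff the `jᴿ` law is valid:
if `I ⊆ v(A ⊸ᴿ B)` then `v(A) ⊆ v(B)`. -/
theorem RSLU_iff_jR_valid (W : Type) (le : W → W → Prop) (I : Set W)
    (R : W → W → W → Prop) (hF : IsTernaryFrame le I R) :
    (∀ a, ∃ e ∈ I, R e a a) ↔
    (∀ v : Fma2 → Set W,
        (∀ (A : Fma2) {a b}, le a b → b ∈ v A → a ∈ v A) →
        (∀ A B, v (Fma2.lR A B) = {c | ∀ a ∈ v A, ∀ b, R c a b → b ∈ v B}) →
        ∀ A B : Fma2, I ⊆ v (Fma2.lR A B) → v A ⊆ v B) := by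
  constructor
  · intro h v _hdown hlR A B hI a ha
    obtain ⟨e, heI, heR⟩ := h a
    have he := hI heI
    rw [hlR] at he
    exact he a ha a heR
  · intro h a
    let v : Fma2 → Set W := fun F =>
      Fma2.rec (motive := fun _ => Set W)
        (fun n => if n = 0 then {x | le x a} else {b | ∃ e ∈ I, R e a b})
        ∅ (fun _ _ _ _ => ∅) (fun _ _ _ _ => ∅) (fun _ _ _ _ => ∅)
        (fun A B vA vB => {c | ∀ x ∈ vA, ∀ b, R c x b → b ∈ vB}) F
    have hdown : ∀ (A : Fma2) {x y}, le x y → y ∈ v A → x ∈ v A := by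
      intro A
      induction A with
      | atom n =>
        intro x y hxy hy
        by_cases hn : n = 0
        · simp only [v, hn, if_true, Set.mem_setOf_eq] at *
          exact hF.trans hxy hy
        · simp only [v, if_neg hn, Set.mem_setOf_eq] at *
          obtain ⟨e, heI, heR⟩ := hy
          exact ⟨e, heI, hF.L_down₃ hxy heR⟩
      | I => intro x y _ hy; exact hy.elim
      | tL _ _ _ _ => intro x y _ hy; exact hy.elim
      | lL _ _ _ _ => intro x y _ hy; exact hy.elim
      | tR _ _ _ _ => intro x y _ hy; exact hy.elim
      | lR A B _ _ =>
        intro x y hxy hy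
        intro z hz b hR
        exact hy z hz b (hF.L_up₁ hxy hR)
    have hlR : ∀ A B, v (Fma2.lR A B) = {c | ∀ x ∈ v A, ∀ b, R c x b → b ∈ v B} :=
      fun A B => rfl
    have hsub : I ⊆ v (Fma2.lR (Fma2.atom 0) (Fma2.atom 1)) := by
      intro e heI
      intro x hx b hR
      have hxa : le x a := by simpa [v] using hx
      have : R e a b := hF.L_up₂ hxa hR
      show b ∈ v (Fma2.atom 1)
      simp only [v, if_neg one_ne_zero, Set.mem_setOf_eq]
      exact ⟨e, heI, this⟩
    have ha : a ∈ v (Fma2.atom 0) := by simp [v, hF.refl a]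
    have hb := h v hdown hlR (Fma2.atom 0) (Fma2.atom 1) hsub ha
    simpa [v] using hb
end
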